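/- Let κ_1, κ_2, κ_3 > 0 be real numbers and let d ≥ 1 be an integer. Consider the planar differential equation ẋ = κ_1 x² − κ_2 xy, ẏ = dκ_2 xy − κ_3 y. Then (x̄, ȳ) = (κ_3/(dκ_2), κ_1κ_3/(dκ_2²)) is the unique equilibrium in the open positive quadrant ℝ^2_{>0}; writing J for the Jacobian matrix of the vector field at (x̄, ȳ), one has det J > 0 and tr J > 0; and the system has no periodic orbit in ℝ^2_{≥0}, i.e., there is no nonconstant differentiable T-periodic function (x,y) : ℝ → ℝ^2_{≥0} (T > 0) solving the equation. -/

import Mathlib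

lemma monoPerConst {f : ℝ → ℝ} {T : ℝ} (hT : 0 < T) (hm : Monotone f)
    (hp : ∀ t, f (t + T) = f t) (a b : ℝ) : f a = f b := by
  have hp' : Function.Periodic f T := hp
  have key : ∀ u v : ℝ, f u ≤ f v := by
    intro u v
    obtain ⟨n, hn⟩ := exists_nat_ge ((u - v) / T)
    have h1 : u ≤ v + n * T := by
      rw [div_le_iff₀ hT] at hn; linarith
    have h2 := hp'.sub_nat_mul_eq (x := v + n * T) n
    simp only [add_sub_cancel_right] at h2
    calc f u ≤ f (v + n * T) := hm h1
      _ = f v := h2.symm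
  exact le_antisymm (key a b) (key b a)

lemma zeroBefore {f : ℝ → ℝ} (hm : Monotone f) (h0 : ∀ t, 0 ≤ f t) {t₁ t : ℝ}
    (ht : t ≤ t₁) (hz : f t₁ = 0) : f t = 0 :=
  le_antisymm (hz ▸ hm ht) (h0 t)

lemma perZero {f : ℝ → ℝ} {T : ℝ} (hT : 0 < T) (hp : ∀ t, f (t + T) = f t)
    {t₁ : ℝ} (hz : ∀ t ≤ t₁, f t = 0) (t : ℝ) : f t = 0 := by
  have hp' : Function.Periodic f T := hp
  obtain ⟨n, hn⟩ := exists_nat_ge ((t - t₁) / T)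
  have h1 : t - n * T ≤ t₁ := by
    rw [div_le_iff₀ hT] at hn; linarith
  have h2 := hp'.sub_nat_mul_eq (x := t) n
  rw [← h2]; exact hz _ h1


/-- For the generalised Lotka–Volterra–Autocatalator mass-action system
`ẋ = κ₁x² − κ₂xy`, `ẏ = dκ₂xy − κ₃y` (with `d ≥ 1` an integer and positive rate
constants): `(κ₃/(dκ₂), κ₁κ₃/(dκ₂²))` is the unique equilibrium in the open
positive quadrant, the Jacobian there has positive determinant and positive
trace, and there is no periodic orbit in the closed nonnegative quadrant. -/
theorem stmt16 (κ₁ κ₂ κ₃ : ℝ) (hκ₁ : 0 < κ₁) (hκ₂ : 0 < κ₂) (hκ₃ : 0 < κ₃)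
    (d : ℤ) (hd : 1 ≤ d) :
    -- unique positive equilibrium
    (∀ p : ℝ × ℝ, 0 < p.1 → 0 < p.2 →
      ((κ₁ * p.1 ^ 2 - κ₂ * p.1 * p.2 = 0 ∧
        (d : ℝ) * κ₂ * p.1 * p.2 - κ₃ * p.2 = 0) ↔
        p = (κ₃ / ((d : ℝ) * κ₂), κ₁ * κ₃ / ((d : ℝ) * κ₂ ^ 2)))) ∧
    -- det J > 0 and tr J > 0 at the equilibrium
    (let xb : ℝ := κ₃ / ((d : ℝ) * κ₂)
     let yb : ℝ := κ₁ * κ₃ / ((d : ℝ) * κ₂ ^ 2)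
     let J₁₁ : ℝ := deriv (fun s => κ₁ * s ^ 2 - κ₂ * s * yb) xb
     let J₁₂ : ℝ := deriv (fun s => κ₁ * xb ^ 2 - κ₂ * xb * s) yb
     let J₂₁ : ℝ := deriv (fun s => (d : ℝ) * κ₂ * s * yb - κ₃ * yb) xb
     let J₂₂ : ℝ := deriv (fun s => (d : ℝ) * κ₂ * xb * s - κ₃ * s) yb
     0 < J₁₁ * J₂₂ - J₁₂ * J₂₁ ∧ 0 < J₁₁ + J₂₂) ∧
    -- no periodic orbit in ℝ²(≥0)
    ¬ ∃ (x y : ℝ → ℝ) (T : ℝ), 0 < T ∧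
      (∀ t, 0 ≤ x t ∧ 0 ≤ y t) ∧
      (∀ t, HasDerivAt x (κ₁ * x t ^ 2 - κ₂ * x t * y t) t) ∧
      (∀ t, HasDerivAt y ((d : ℝ) * κ₂ * x t * y t - κ₃ * y t) t) ∧
      (∀ t, x (t + T) = x t ∧ y (t + T) = y t) ∧
      (∃ t s, (x t, y t) ≠ (x s, y s)) := by
  refine ⟨?_, ?_, ?_⟩
  · -- unique equilibrium
    have hd' : (1:ℝ) ≤ (d:ℝ) := by exact_mod_cast hd
    have hdpos : (0:ℝ) < (d:ℝ) := by linarith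
    rintro ⟨px, py⟩ hx hy
    simp only [Prod.mk.injEq]
    constructor
    · rintro ⟨h1, h2⟩
      have hx0 : px ≠ 0 := ne_of_gt hx
      have hy0 : py ≠ 0 := ne_of_gt hy
      have e2 : (d:ℝ) * κ₂ * px = κ₃ := by
        have := mul_right_cancel₀ hy0 (by linarith : ((d:ℝ) * κ₂ * px) * py = κ₃ * py)
        exact this
      have e1 : κ₁ * px = κ₂ * py := by
        have : (κ₁ * px) * px = (κ₂ * py) * px := by ring_nf; ring_nf at h1; linarith
        exact mul_right_cancel₀ hx0 this
      have hx' : px = κ₃ / ((d:ℝ) * κ₂) := by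
        field_simp
        linarith
      refine ⟨hx', ?_⟩
      rw [hx'] at e1
      field_simp at e1 ⊢
      try linarith
    · rintro ⟨h1, h2⟩
      subst h1 h2
      constructor <;> (field_simp; try ring)
  · -- Jacobian
    have hd' : (1:ℝ) ≤ (d:ℝ) := by exact_mod_cast hd
    have hdpos : (0:ℝ) < (d:ℝ) := by linarith
    intro xb yb J₁₁ J₁₂ J₂₁ J₂₂
    have hxb : xb = κ₃ / ((d:ℝ) * κ₂) := rfl
    have hyb : yb = κ₁ * κ₃ / ((d:ℝ) * κ₂ ^ 2) := rfl
    have d11 : HasDerivAt (fun s => κ₁ * s ^ 2 - κ₂ * s * yb) (κ₁ * (2 * xb) - κ₂ * yb) xb := by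
      have h1 : HasDerivAt (fun s : ℝ => κ₁ * s ^ 2) (κ₁ * (2 * xb)) xb := by
        simpa using ((hasDerivAt_pow 2 xb).const_mul κ₁)
      have h2 : HasDerivAt (fun s : ℝ => κ₂ * s * yb) (κ₂ * yb) xb := by
        simpa using (((hasDerivAt_id xb).const_mul κ₂).mul_const yb)
      exact h1.sub h2
    have d12 : HasDerivAt (fun s => κ₁ * xb ^ 2 - κ₂ * xb * s) (-(κ₂ * xb)) yb := by
      exact ((hasDerivAt_const yb (κ₁ * xb ^ 2)).sub (((hasDerivAt_id yb).const_mul (κ₂ * xb)))).congr_deriv (by ring)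
    have d21 : HasDerivAt (fun s => (d:ℝ) * κ₂ * s * yb - κ₃ * yb) ((d:ℝ) * κ₂ * yb) xb := by
      exact ((((hasDerivAt_id xb).const_mul ((d:ℝ) * κ₂)).mul_const yb).sub
        (hasDerivAt_const xb (κ₃ * yb))).congr_deriv (by ring)
    have d22 : HasDerivAt (fun s => (d:ℝ) * κ₂ * xb * s - κ₃ * s) ((d:ℝ) * κ₂ * xb - κ₃) yb := by
      exact (((hasDerivAt_id yb).const_mul ((d:ℝ) * κ₂ * xb)).sub
        ((hasDerivAt_id yb).const_mul κ₃)).congr_deriv (by ring)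
    have e11 : J₁₁ = κ₁ * (2 * xb) - κ₂ * yb := d11.deriv
    have e12 : J₁₂ = -(κ₂ * xb) := d12.deriv
    have e21 : J₂₁ = (d:ℝ) * κ₂ * yb := d21.deriv
    have e22 : J₂₂ = (d:ℝ) * κ₂ * xb - κ₃ := d22.deriv
    rw [e11, e12, e21, e22, hxb, hyb]
    constructor
    · have h0 : (d:ℝ) * κ₂ * (κ₃ / ((d:ℝ) * κ₂)) - κ₃ = 0 := by field_simp; ring
      rw [h0]
      simp only [mul_zero, zero_sub, neg_mul, neg_neg]
      positivity
    · have h0 : (d:ℝ) * κ₂ * (κ₃ / ((d:ℝ) * κ₂)) - κ₃ = 0 := by field_simp; ring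
      rw [h0]
      have : κ₁ * (2 * (κ₃ / ((d:ℝ) * κ₂))) - κ₂ * (κ₁ * κ₃ / ((d:ℝ) * κ₂ ^ 2))
          = κ₁ * κ₃ / ((d:ℝ) * κ₂) := by field_simp; ring
      rw [this]; positivity
  · -- no periodic orbit
    have hd' : (1:ℝ) ≤ (d:ℝ) := by exact_mod_cast hd
    have hdpos : (0:ℝ) < (d:ℝ) := by linarith
    rintro ⟨x, y, T, hT, hnn, hx, hy, hper, t₀, s₀, hne⟩
    have hperx : ∀ t, x (t + T) = x t := fun t => (hper t).1
    have hpery : ∀ t, y (t + T) = y t := fun t => (hper t).2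
    have hyc : Continuous y := by
      have : Differentiable ℝ y := fun t => (hy t).differentiableAt
      exact this.continuous
    by_cases hX : ∃ t₁, x t₁ = 0
    · -- case A : x vanishes somewhere, hence everywhere, then y ≡ 0
      obtain ⟨t₁, ht₁⟩ := hX
      set Y : ℝ → ℝ := fun t => ∫ s in (0:ℝ)..t, y s with hYdef
      have hYd : ∀ t, HasDerivAt Y (y t) t :=
        fun t => (hyc.integral_hasStrictDerivAt 0 t).hasDerivAt
      set w : ℝ → ℝ := fun t => x t * Real.exp (κ₂ * Y t) with hwdef
      have hwd : ∀ t, HasDerivAt w (κ₁ * x t ^ 2 * Real.exp (κ₂ * Y t)) t := by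
        intro t
        have h1 := (hx t).mul (((hYd t).const_mul κ₂).exp)
        refine h1.congr_deriv ?_; ring
      have hwm : Monotone w := by
        refine monotone_of_deriv_nonneg (fun t => (hwd t).differentiableAt) (fun t => ?_)
        rw [(hwd t).deriv]; positivity
      have hw0 : ∀ t, 0 ≤ w t := fun t => mul_nonneg (hnn t).1 (Real.exp_pos _).le
      have hwz : w t₁ = 0 := by simp [hwdef, ht₁]
      have hxzb : ∀ t ≤ t₁, x t = 0 := by
        intro t ht
        have h := zeroBefore hwm hw0 ht hwz
        rcases mul_eq_zero.mp h with h' | h'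
        · exact h'
        · exact absurd h' (Real.exp_pos _).ne'
      have hxz : ∀ t, x t = 0 := perZero hT hperx hxzb
      set v : ℝ → ℝ := fun t => y t * Real.exp (κ₃ * t) with hvdef
      have hvd : ∀ t, HasDerivAt v 0 t := by
        intro t
        have h1 := (hy t).mul (((hasDerivAt_id t).const_mul κ₃).exp)
        simp only [id_eq] at h1
        refine h1.congr_deriv ?_
        rw [hxz t]; ring
      have hvc : ∀ a b, v a = v b :=
        is_const_of_deriv_eq_zero (fun t => (hvd t).differentiableAt)
          (fun t => (hvd t).deriv)
      have hyT : y T = y 0 := by simpa using hpery 0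
      have hE : 1 < Real.exp (κ₃ * T) := by
        have := Real.add_one_le_exp (κ₃ * T)
        nlinarith [mul_pos hκ₃ hT]
      have hy0 : y 0 = 0 := by
        have h0 := hvc T 0
        simp only [hvdef, hyT, mul_zero, Real.exp_zero, mul_one] at h0
        nlinarith [(hnn 0).2]
      have hyz : ∀ t, y t = 0 := by
        intro t
        have h := hvc t 0
        simp only [hvdef, hy0, mul_zero, Real.exp_zero, mul_one, zero_mul] at h
        rcases mul_eq_zero.mp h with h' | h'
        · exact h'
        · exact absurd h' (Real.exp_pos _).ne'
      exact hne (by rw [hxz t₀, hxz s₀, hyz t₀, hyz s₀])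
    by_cases hYc : ∃ t₁, y t₁ = 0
    · -- case B : y vanishes somewhere, hence everywhere, then x constant
      obtain ⟨t₁, ht₁⟩ := hYc
      set v : ℝ → ℝ := fun t => y t * Real.exp (κ₃ * t) with hvdef
      have hvd : ∀ t, HasDerivAt v ((d:ℝ) * κ₂ * x t * y t * Real.exp (κ₃ * t)) t := by
        intro t
        have h1 := (hy t).mul (((hasDerivAt_id t).const_mul κ₃).exp)
        simp only [id_eq] at h1
        refine h1.congr_deriv ?_; ring
      have hvm : Monotone v := by
        refine monotone_of_deriv_nonneg (fun t => (hvd t).differentiableAt) (fun t => ?_)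
        rw [(hvd t).deriv]
        have := (hnn t).1; have := (hnn t).2
        have := (Real.exp_pos (κ₃ * t)).le
        positivity
      have hv0 : ∀ t, 0 ≤ v t := fun t => mul_nonneg (hnn t).2 (Real.exp_pos _).le
      have hvz : v t₁ = 0 := by simp [hvdef, ht₁]
      have hyzb : ∀ t ≤ t₁, y t = 0 := by
        intro t ht
        have h := zeroBefore hvm hv0 ht hvz
        rcases mul_eq_zero.mp h with h' | h'
        · exact h'
        · exact absurd h' (Real.exp_pos _).ne'
      have hyz : ∀ t, y t = 0 := perZero hT hpery hyzb
      have hxd : ∀ t, HasDerivAt x (κ₁ * x t ^ 2) t := by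
        intro t
        have := hx t
        rw [hyz t] at this
        simpa using this
      have hxm : Monotone x := by
        refine monotone_of_deriv_nonneg (fun t => (hxd t).differentiableAt) (fun t => ?_)
        rw [(hxd t).deriv]; positivity
      have hxc : ∀ a b, x a = x b := monoPerConst hT hxm hperx
      exact hne (by rw [hxc t₀ s₀, hyz t₀, hyz s₀])
    · -- case C : interior orbit, Lyapunov function
      push_neg at hX hYc
      have hxp : ∀ t, 0 < x t := fun t => lt_of_le_of_ne (hnn t).1 (Ne.symm (hX t))
      have hyp : ∀ t, 0 < y t := fun t => lt_of_le_of_ne (hnn t).2 (Ne.symm (hYc t))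
      set xbar : ℝ := κ₃ / ((d:ℝ) * κ₂) with hxbar
      set e : ℝ := κ₁ * κ₃ / ((d:ℝ) * κ₂ ^ 2) with he
      set V : ℝ → ℝ := fun t =>
        (d:ℝ) * x t - (κ₃ / κ₂) * Real.log (x t) + y t - e * Real.log (y t) with hVdef
      have hVd : ∀ t, HasDerivAt V ((d:ℝ) * κ₁ * (x t - xbar) ^ 2) t := by
        intro t
        have h1 := (((hx t).const_mul (d:ℝ)).sub
          (((hx t).log (hxp t).ne').const_mul (κ₃ / κ₂))).add (hy t) |>.sub
          (((hy t).log (hyp t).ne').const_mul e)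
        refine h1.congr_deriv ?_
        have hx0 : x t ≠ 0 := (hxp t).ne'
        have hy0 : y t ≠ 0 := (hyp t).ne'
        have hκ0 : κ₂ ≠ 0 := hκ₂.ne'
        have hd0 : (d:ℝ) ≠ 0 := hdpos.ne'
        rw [hxbar, he]
        field_simp
        ring
      have hVm : Monotone V := by
        refine monotone_of_deriv_nonneg (fun t => (hVd t).differentiableAt) (fun t => ?_)
        rw [(hVd t).deriv]; positivity
      have hVper : ∀ t, V (t + T) = V t := by
        intro t; simp [hVdef, hperx t, hpery t]
      have hVc : ∀ a b, V a = V b := monoPerConst hT hVm hVper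
      have hVfun : V = fun _ => V 0 := funext fun t => hVc t 0
      have hVzero : ∀ t, (d:ℝ) * κ₁ * (x t - xbar) ^ 2 = 0 := by
        intro t
        have h0 : HasDerivAt V 0 t := by
          rw [hVfun]; exact hasDerivAt_const t (V 0)
        exact (hVd t).unique h0
      have hxconst : ∀ t, x t = xbar := by
        intro t
        have h := hVzero t
        have h2 : (x t - xbar) ^ 2 = 0 := by
          have hdk : (d:ℝ) * κ₁ ≠ 0 := by positivity
          exact (mul_eq_zero.mp h).resolve_left hdk
        have := pow_eq_zero_iff (n := 2) (by norm_num) |>.mp h2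
        linarith
      have hxfun : x = fun _ => xbar := funext hxconst
      have hyconst : ∀ t, y t = κ₁ * xbar / κ₂ := by
        intro t
        have h0 : HasDerivAt x 0 t := by
          rw [hxfun]; exact hasDerivAt_const t xbar
        have h1 : κ₁ * x t ^ 2 - κ₂ * x t * y t = 0 := (hx t).unique h0
        rw [hxconst t] at h1
        have hxbp : 0 < xbar := by rw [hxbar]; positivity
        field_simp
        nlinarith
      exact hne (by rw [hxconst t₀, hxconst s₀, hyconst t₀, hyconst s₀])
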